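/- Let K be the Klein bottle group, realized as the semidirect product ℤ ⋊ ℤ with multiplication (n,m)·(n',m') = (n + (−1)^m n', m + m'). For any integers n₁, n₂, the centralizer in K of the element v = (n₂, 2n₁+1) is exactly the cyclic subgroup generated by (n₂, 1). -/

import Mathlib

/-- The Klein bottle group realized as the semidirect product `ℤ ⋊ ℤ`,
with multiplication `(n,m)·(n',m') = (n + (−1)^m n', m + m')`. -/
@[ext] structure KleinBottle where
  n : ℤ
  m : ℤ

namespace KleinBottle

instance : Mul KleinBottle := ⟨fun a b => ⟨a.n + a.m.negOnePow * b.n, a.m + b.m⟩⟩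
instance : One KleinBottle := ⟨⟨0, 0⟩⟩
instance : Inv KleinBottle := ⟨fun a => ⟨-(a.m.negOnePow * a.n), -a.m⟩⟩

theorem mul_def (a b : KleinBottle) :
    a * b = ⟨a.n + a.m.negOnePow * b.n, a.m + b.m⟩ := rfl

theorem one_def : (1 : KleinBottle) = ⟨0, 0⟩ := rfl

theorem inv_def (a : KleinBottle) : a⁻¹ = ⟨-(a.m.negOnePow * a.n), -a.m⟩ := rfl

instance : Group KleinBottle where
  mul_assoc a b c := by
    ext <;> simp [mul_def, Int.negOnePow_add] <;> ring
  one_mul a := by ext <;> simp [mul_def, one_def]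
  mul_one a := by ext <;> simp [mul_def, one_def]
  inv_mul_cancel a := by
    ext <;> simp [mul_def, inv_def, one_def, Int.negOnePow_neg]

end KleinBottle

/-- In the Klein bottle group, the centralizer of `v = (n₂, 2n₁+1)` is exactly the
cyclic subgroup generated by `(n₂, 1)`. -/

lemma kb_pow (n₂ : ℤ) : ∀ y : ℤ, (⟨n₂, 1⟩ : KleinBottle) ^ y =
    ⟨if Even y then 0 else n₂, y⟩ := by
  intro y
  induction y using Int.induction_on with
  | zero => simp [KleinBottle.one_def]
  | succ k ih =>
    rw [zpow_add_one, ih, KleinBottle.mul_def]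
    by_cases h : Even (k : ℤ)
    · simp [h, Int.even_add_one, Int.negOnePow_even _ h]
      exact fun ho => absurd ho (Nat.not_odd_iff_even.mpr (by exact_mod_cast h))
    · simp [h, Int.even_add_one, Int.negOnePow_odd _ (Int.not_even_iff_odd.mp h)]
      exact fun he => absurd (by exact_mod_cast he : Even (k : ℤ)) h
  | pred k ih =>
    rw [zpow_sub_one, ih, KleinBottle.inv_def, KleinBottle.mul_def]
    by_cases h : Even (-(k : ℤ))
    · have : ¬ Even (-(k:ℤ) - 1) := by simp [Int.even_sub_one, h]; simpa using h
      simp [h, this, Int.negOnePow_even _ h, Int.negOnePow_one]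
      ring
    · have : Even (-(k:ℤ) - 1) := by simp [Int.even_sub_one, h]; simpa using h
      simp [h, this, Int.negOnePow_odd _ (Int.not_even_iff_odd.mp h), Int.negOnePow_one]
      ring

theorem stmt_8 (n₁ n₂ : ℤ) :
    Subgroup.centralizer ({⟨n₂, 2 * n₁ + 1⟩} : Set KleinBottle) =
      Subgroup.zpowers (⟨n₂, 1⟩ : KleinBottle) := by
  ext g
  rw [Subgroup.mem_centralizer_iff, Subgroup.mem_zpowers_iff]
  have hodd : Odd (2 * n₁ + 1) := ⟨n₁, by ring⟩
  constructor
  · intro h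
    have hv : (⟨n₂, 2 * n₁ + 1⟩ : KleinBottle) * g = g * ⟨n₂, 2 * n₁ + 1⟩ :=
      h _ (Set.mem_singleton _)
    refine ⟨g.m, ?_⟩
    rw [kb_pow]
    rw [KleinBottle.mul_def, KleinBottle.mul_def] at hv
    have h2 := congrArg KleinBottle.n hv
    simp [Int.negOnePow_odd _ hodd] at h2
    rcases Int.even_or_odd g.m with he | ho
    · rw [Int.negOnePow_even _ he] at h2
      push_cast at h2
      ext <;> simp [he]
      · linarith
    · rw [Int.negOnePow_odd _ ho] at h2
      push_cast at h2
      ext <;> simp [Int.not_even_iff_odd.mpr ho]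
      · linarith
  · rintro ⟨k, rfl⟩ x hx
    rw [Set.mem_singleton_iff] at hx
    subst hx
    rw [kb_pow, KleinBottle.mul_def, KleinBottle.mul_def]
    by_cases h : Even k
    · simp [h, Int.negOnePow_even _ h, Int.negOnePow_odd _ hodd]
      ring
    · simp [h, Int.negOnePow_odd _ hodd, Int.negOnePow_odd _ (Int.not_even_iff_odd.mp h)]
      omega
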